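/- If G is a 3-uniform hypergraph on n vertices in which every pair of vertices has codegree at least 3, then G contains a copy of F_5, the hypergraph with vertices {1,2,3,4,5} and edges {123, 124, 345}. Consequently, every F_5-free 3-uniform hypergraph on n ≥ 5 vertices has some pair of vertices with codegree at most 2. -/
import Mathlib


open Finset

/-- The codegree of a pair of vertices: number of edges containing both. -/
def codeg {V : Type*} [DecidableEq V] (E : Finset (Finset V)) (x y : V) : ℕ :=
  (E.filter (fun e => x ∈ e ∧ y ∈ e)).card

/-- `G` contains a copy of `F_5` (edges 123, 124, 345): five distinct vertices
`a,b,c,d,e` with `abc`, `abd`, `cde` all edges. -/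
def ContainsF5 {V : Type*} [DecidableEq V] (E : Finset (Finset V)) : Prop :=
  ∃ a b c d e : V, ({a, b, c, d, e} : Finset V).card = 5 ∧
    ({a, b, c} : Finset V) ∈ E ∧ ({a, b, d} : Finset V) ∈ E ∧ ({c, d, e} : Finset V) ∈ E

/-- Third-vertex set of a pair. -/
private def thirds {V : Type*} [Fintype V] [DecidableEq V] (E : Finset (Finset V)) (x y : V) :
    Finset V :=
  Finset.univ.filter (fun z => z ≠ x ∧ z ≠ y ∧ ({x, y, z} : Finset V) ∈ E)

private lemma codeg_le_thirds {V : Type*} [Fintype V] [DecidableEq V]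
    (E : Finset (Finset V)) (h3 : ∀ e ∈ E, e.card = 3) (x y : V) (hxy : x ≠ y) :
    codeg E x y ≤ (thirds E x y).card := by
  apply Finset.card_le_card_of_surjOn (fun z => ({x, y, z} : Finset V))
  intro e he
  simp only [Finset.mem_coe, Finset.mem_filter] at he
  obtain ⟨heE, hx, hy⟩ := he
  have hsub : ({x, y} : Finset V) ⊆ e := by
    intro t ht; simp only [Finset.mem_insert, Finset.mem_singleton] at ht
    rcases ht with rfl | rfl <;> assumption
  have hcard2 : ({x, y} : Finset V).card = 2 := by
    rw [Finset.card_insert_of_notMem (by simpa using hxy), Finset.card_singleton]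
  have hone : (e \ {x, y}).card = 1 := by
    rw [Finset.card_sdiff_of_subset hsub, h3 e heE, hcard2]
  obtain ⟨z, hz⟩ := Finset.card_eq_one.mp hone
  have hzmem : z ∈ e \ ({x, y} : Finset V) := by rw [hz]; exact Finset.mem_singleton_self z
  rw [Finset.mem_sdiff, Finset.mem_insert, Finset.mem_singleton] at hzmem
  have he : e = {x, y, z} := by
    have := Finset.union_sdiff_of_subset hsub
    rw [hz] at this
    rw [← this]
    ext t; simp [Finset.mem_insert, Finset.mem_union, or_assoc]
  refine ⟨z, ?_, he.symm⟩
  simp only [Finset.mem_coe, thirds, Finset.mem_filter, Finset.mem_univ, true_and]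
  exact ⟨fun h => hzmem.2 (Or.inl h), fun h => hzmem.2 (Or.inr h), he ▸ heE⟩

/-- If every pair of vertices of a 3-uniform hypergraph on at least 5 vertices has
codegree at least 3, then it contains a copy of `F_5`. Consequently, every
`F_5`-free 3-uniform hypergraph on `n ≥ 5` vertices has a pair of vertices of
codegree at most 2. -/
theorem F5_of_min_codegree_three {V : Type*} [Fintype V] [DecidableEq V]
    (E : Finset (Finset V)) (h3 : ∀ e ∈ E, e.card = 3) (hcard : 5 ≤ Fintype.card V) :
    ((∀ x y : V, x ≠ y → 3 ≤ codeg E x y) → ContainsF5 E) ∧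
    (¬ ContainsF5 E → ∃ x y : V, x ≠ y ∧ codeg E x y ≤ 2) := by
  have main : (∀ x y : V, x ≠ y → 3 ≤ codeg E x y) → ContainsF5 E := by
    intro hmin
    obtain ⟨a, b, hab⟩ := Fintype.exists_pair_of_one_lt_card (α := V) (by omega)
    have hTab : 3 ≤ (thirds E a b).card :=
      le_trans (hmin a b hab) (codeg_le_thirds E h3 a b hab)
    obtain ⟨c, hc, d, hd, hcd⟩ := Finset.one_lt_card.mp (by omega : 1 < (thirds E a b).card)
    simp only [thirds, Finset.mem_filter, Finset.mem_univ, true_and] at hc hd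
    have hcdne : c ≠ d := hcd
    have hTcd : 3 ≤ (thirds E c d).card :=
      le_trans (hmin c d hcdne) (codeg_le_thirds E h3 c d hcdne)
    have : ((thirds E c d) \ {a, b}).Nonempty := by
      rw [← Finset.card_pos]
      have h1 : ({a, b} : Finset V).card ≤ 2 := Finset.card_insert_le .. |>.trans (by simp)
      have := Finset.le_card_sdiff ({a,b} : Finset V) (thirds E c d)
      omega
    obtain ⟨e, he⟩ := this
    rw [Finset.mem_sdiff, Finset.mem_insert, Finset.mem_singleton] at he
    obtain ⟨heT, heab⟩ := he
    simp only [thirds, Finset.mem_filter, Finset.mem_univ, true_and] at heT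
    obtain ⟨hec, hed, hcde⟩ := heT
    refine ⟨a, b, c, d, e, ?_, hc.2.2, hd.2.2, hcde⟩
    have hea : e ≠ a := fun h => heab (Or.inl h)
    have heb : e ≠ b := fun h => heab (Or.inr h)
    rw [Finset.card_insert_of_notMem (by simp [hab, hc.1.symm, hd.1.symm, hea.symm]),
        Finset.card_insert_of_notMem (by simp [hc.2.1.symm, hd.2.1.symm, heb.symm]),
        Finset.card_insert_of_notMem (by simp [hcdne, hec.symm]),
        Finset.card_insert_of_notMem (by simp [hed.symm]), Finset.card_singleton]
  refine ⟨main, fun hno => ?_⟩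
  by_contra h
  push_neg at h
  exact hno (main fun x y hxy => by have := h x y hxy; omega)
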